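/- Let Y₁, ..., Y_n be i.i.d. nonnegative real-valued random variables with P(Y₁ > 0) ≤ 1/n. Then E[max_{1 ≤ k ≤ n} Y_k] ≥ (n/2) E[Y₁]. -/

import Mathlib

open MeasureTheory ProbabilityTheory
open scoped ENNReal

/-- If `Y₀, ..., Y_n` are i.i.d. nonnegative random variables with
`P(Y₀ > 0) ≤ 1/(n+1)`, then `E[max_k Y_k] ≥ ((n+1)/2) E[Y₀]`. -/
theorem stmt_3 {Ω : Type*} [MeasureSpace Ω] [IsProbabilityMeasure (volume : Measure Ω)]
    (n : ℕ) (Y : Fin (n + 1) → Ω → ℝ)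
    (hmeas : ∀ i, Measurable (Y i))
    (hnn : ∀ i ω, 0 ≤ Y i ω)
    (hindep : iIndepFun Y volume)
    (hident : ∀ i, IdentDistrib (Y i) (Y 0) volume volume)
    (htail : (volume {ω | 0 < Y 0 ω}).toReal ≤ 1 / (n + 1 : ℝ)) :
    ((n + 1 : ℝ≥0∞) / 2) * ∫⁻ ω, ENNReal.ofReal (Y 0 ω) ≤
      ∫⁻ ω, ENNReal.ofReal (Finset.univ.sup' Finset.univ_nonempty (fun k => Y k ω)) := by
  set M : Ω → ℝ≥0∞ := fun ω =>
    ENNReal.ofReal (Finset.univ.sup' Finset.univ_nonempty (fun k => Y k ω)) with hM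
  set I : ℝ≥0∞ := ∫⁻ ω, ENNReal.ofReal (Y 0 ω) with hI
  -- pointwise: each Y i ≤ max
  have hle : ∀ (i : Fin (n+1)) ω, ENNReal.ofReal (Y i ω) ≤ M ω := fun i ω =>
    ENNReal.ofReal_le_ofReal (Finset.le_sup' (fun k => Y k ω) (Finset.mem_univ i))
  by_cases hItop : I = ⊤
  · have : (⊤ : ℝ≥0∞) ≤ ∫⁻ ω, M ω := by
      rw [← hItop, hI]
      exact lintegral_mono (hle 0)
    exact le_trans le_top this
  -- the events B i = {∀ j < i, Y j = 0}
  set B : Fin (n+1) → Set Ω := fun i => {ω | ∀ j < i, Y j ω = 0} with hB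
  have hBmeas : ∀ i, MeasurableSet (B i) := by
    intro i
    have : B i = ⋂ (j : Fin (n+1)) (_ : j < i), Y j ⁻¹' {0} := by
      ext ω; simp [hB, Set.mem_iInter]
    rw [this]
    exact MeasurableSet.iInter fun j => MeasurableSet.iInter fun _ =>
      hmeas j (measurableSet_singleton 0)
  set f : Fin (n+1) → Ω → ℝ≥0∞ :=
    fun i ω => ENNReal.ofReal (Y i ω) * (B i).indicator 1 ω with hf
  have hfmeas : ∀ i, Measurable (f i) := fun i =>
    ((ENNReal.measurable_ofReal.comp (hmeas i))).mul
      ((measurable_const).indicator (hBmeas i))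
  -- pointwise sum bound
  have hsum_le : ∀ ω, (∑ i, f i ω) ≤ M ω := by
    intro ω
    have hkey : ∀ i, f i ω ≠ 0 → ω ∈ B i ∧ 0 < Y i ω := by
      intro i hi
      by_cases h1 : ω ∈ B i
      · refine ⟨h1, ?_⟩
        rcases lt_or_eq_of_le (hnn i ω) with h | h
        · exact h
        · exfalso; apply hi; simp [hf, ← h]
      · exfalso; apply hi; simp [hf, Set.indicator_of_notMem h1]
    by_cases h : ∃ i, f i ω ≠ 0
    · obtain ⟨i, hi⟩ := h
      have huniq : ∀ j ∈ Finset.univ, j ≠ i → f j ω = 0 := by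
        intro j _ hj
        by_contra hfj
        obtain ⟨hBi, hYi⟩ := hkey i hi
        obtain ⟨hBj, hYj⟩ := hkey j hfj
        rcases lt_or_gt_of_ne hj with h1 | h1
        · exact absurd (hBi j h1) (ne_of_gt hYj)
        · exact absurd (hBj i h1) (ne_of_gt hYi)
      rw [Finset.sum_eq_single i huniq (fun h => absurd (Finset.mem_univ i) h)]
      calc f i ω ≤ ENNReal.ofReal (Y i ω) * 1 := by
            refine mul_le_mul_right ?_ _
            exact Set.indicator_le' (fun _ _ => le_rfl) (fun _ _ => zero_le) ω
        _ = ENNReal.ofReal (Y i ω) := mul_one _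
        _ ≤ M ω := hle i ω
    · push_neg at h
      simp [h]
  -- independence : ∫ f i = I * μ (B i)
  have hIeq : ∀ i, (∫⁻ ω, ENNReal.ofReal (Y i ω)) = I := by
    intro i
    exact ((hident i).comp ENNReal.measurable_ofReal).lintegral_eq
  have hf_int : ∀ i, (∫⁻ ω, f i ω) = I * volume (B i) := by
    intro i
    have hdis : Disjoint ({i} : Finset (Fin (n+1))) (Finset.Iio i) := by
      simp [Finset.disjoint_left]
    have hIF := hindep.indepFun_finset {i} (Finset.Iio i) hdis hmeas
    set φ : (({i} : Finset (Fin (n+1))) → ℝ) → ℝ≥0∞ :=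
      fun y => ENNReal.ofReal (y ⟨i, Finset.mem_singleton_self i⟩) with hφ
    set ψ := Set.indicator {y : ↥(Finset.Iio i) → ℝ | ∀ j, y j = 0}
      (1 : (↥(Finset.Iio i) → ℝ) → ℝ≥0∞) with hψ
    have hφm : Measurable φ := ENNReal.measurable_ofReal.comp (measurable_pi_apply _)
    have hψm : Measurable ψ := by
      apply measurable_const.indicator
      have : {y : ↥(Finset.Iio i) → ℝ | ∀ j, y j = 0}
          = ⋂ j, (fun y => y j) ⁻¹' {0} := by ext y; simp
      rw [this]
      exact MeasurableSet.iInter fun j => (measurable_pi_apply j) (measurableSet_singleton 0)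
    have hIF2 := hIF.comp hφm hψm
    have heq1 : (φ ∘ fun a (j : ({i} : Finset (Fin (n+1)))) => Y j a)
        = fun ω => ENNReal.ofReal (Y i ω) := rfl
    have heq2 : (ψ ∘ fun a (j : (Finset.Iio i : Finset (Fin (n+1)))) => Y j a)
        = fun ω => (B i).indicator 1 ω := by
      funext ω
      simp only [Function.comp_apply, hψ, Set.indicator_apply]
      congr 1
      simp only [Set.mem_setOf_eq, hB, eq_iff_iff]
      constructor
      · intro h j hj
        exact h ⟨j, Finset.mem_Iio.2 hj⟩
      · intro h j
        exact h j (Finset.mem_Iio.1 j.2)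
    rw [heq1, heq2] at hIF2
    have := lintegral_mul_eq_lintegral_mul_lintegral_of_indepFun
      (ENNReal.measurable_ofReal.comp (hmeas i))
      (measurable_const.indicator (hBmeas i)) hIF2
    simp only [Pi.mul_apply, Function.comp_apply] at this
    exact this.trans (congrArg₂ (· * ·) (hIeq i) (lintegral_indicator_one (hBmeas i)))
  -- union bound : measures of B i
  set p : ℝ≥0∞ := volume {ω | 0 < Y 0 ω} with hp
  have hmeasB_ge : ∀ i : Fin (n+1), (1 : ℝ≥0∞) - (i : ℕ) * p ≤ volume (B i) := by
    intro i
    rw [tsub_le_iff_right]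
    have hcompl : (B i)ᶜ ⊆ ⋃ j ∈ Finset.Iio i, {ω | 0 < Y j ω} := by
      intro ω hω
      simp only [hB, Set.mem_compl_iff, Set.mem_setOf_eq, not_forall] at hω
      obtain ⟨j, hj, hYj⟩ := hω
      exact Set.mem_biUnion (Finset.mem_Iio.2 hj)
        (lt_of_le_of_ne (hnn j ω) (Ne.symm hYj))
    have hident' : ∀ j : Fin (n+1), volume {ω | 0 < Y j ω} = p := by
      intro j
      have : ∀ k : Fin (n+1), {ω | 0 < Y k ω} = Y k ⁻¹' Set.Ioi 0 := by
        intro k; ext ω; simp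
      rw [this j, hp, this 0]
      exact (hident j).measure_mem_eq measurableSet_Ioi
    have : volume ((B i)ᶜ) ≤ (i : ℕ) * p := by
      calc volume ((B i)ᶜ) ≤ ∑ j ∈ Finset.Iio i, volume {ω | 0 < Y j ω} :=
            le_trans (measure_mono hcompl) (measure_biUnion_finset_le _ _)
        _ = (i : ℕ) * p := by
            rw [Finset.sum_congr rfl (fun j _ => hident' j), Finset.sum_const,
              Fin.card_Iio, nsmul_eq_mul]
    calc (1 : ℝ≥0∞) = volume (B i) + volume ((B i)ᶜ) := by
          rw [measure_add_measure_compl (hBmeas i), measure_univ]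
      _ ≤ volume (B i) + (i : ℕ) * p := add_le_add le_rfl this
  -- key numeric bound
  have hnum : ((n + 1 : ℝ≥0∞) / 2) ≤ ∑ i : Fin (n+1), volume (B i) := by
    have hfin : (∑ i : Fin (n+1), volume (B i)) ≠ ⊤ := by
      refine ne_top_of_le_ne_top (b := (n+1 : ℝ≥0∞)) (by simp) ?_
      calc (∑ i : Fin (n+1), volume (B i)) ≤ ∑ _i : Fin (n+1), 1 :=
            Finset.sum_le_sum fun i _ => prob_le_one
        _ = (n+1 : ℝ≥0∞) := by simp
    rw [← ENNReal.toReal_le_toReal (by simp [ENNReal.div_eq_top]) hfin]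
    have h1 : ((n + 1 : ℝ≥0∞) / 2).toReal = ((n:ℝ)+1)/2 := by
      rw [ENNReal.toReal_div, ENNReal.toReal_add (by simp) (by simp)]
      simp
    rw [h1, ENNReal.toReal_sum (fun i _ => ne_top_of_le_ne_top (by simp) (prob_le_one (α := Ω)))]
    have hq : ∀ i : Fin (n+1), 1 - (i : ℕ) * p.toReal ≤ (volume (B i)).toReal := by
      intro i
      have := hmeasB_ge i
      have hfinB : volume (B i) ≠ ⊤ := ne_top_of_le_ne_top (by simp) prob_le_one
      rcases le_or_gt ((i : ℕ) * p) 1 with hc | hc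
      · have h2 := ENNReal.toReal_mono hfinB this
        rw [ENNReal.toReal_sub_of_le hc (by simp)] at h2
        rw [ENNReal.toReal_mul] at h2
        simpa using h2
      · have : (1 : ℝ) ≤ (i : ℕ) * p.toReal := by
          have := ENNReal.toReal_mono (by
            exact ENNReal.mul_ne_top (by simp) (ne_top_of_le_ne_top (by simp) prob_le_one))
            hc.le
          rw [ENNReal.toReal_mul] at this
          simpa using this
        nlinarith [ENNReal.toReal_nonneg (a := volume (B i))]
    calc ((n:ℝ)+1)/2 ≤ ∑ i : Fin (n+1), (1 - (i : ℕ) * p.toReal) := by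
          have hsum : ∑ i : Fin (n+1), ((i : ℕ) : ℝ) = n * (n+1) / 2 := by
            rw [Fin.sum_univ_eq_sum_range (fun i => (i : ℝ))]
            have h2 : ((∑ i ∈ Finset.range (n+1), i : ℕ) : ℝ) * 2 = (n+1) * n := by
              exact_mod_cast congrArg (Nat.cast (R := ℝ)) (Finset.sum_range_id_mul_two (n+1))
            push_cast at h2 ⊢
            linarith
          rw [Finset.sum_sub_distrib, Finset.sum_const, ← Finset.sum_mul, hsum]
          have hple : p.toReal ≤ 1 / (n+1 : ℝ) := htail
          have hpnn : (0:ℝ) ≤ p.toReal := ENNReal.toReal_nonneg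
          simp only [Finset.card_univ, Fintype.card_fin, nsmul_eq_mul]
          have hn1 : (0:ℝ) < (n:ℝ)+1 := by positivity
          have : n * (n+1) / 2 * p.toReal ≤ n * (n+1)/2 * (1/(n+1)) := by
            apply mul_le_mul_of_nonneg_left hple; positivity
          have h3 : (n:ℝ) * (n+1)/2 * (1/(n+1)) = n/2 := by field_simp
          push_cast
          linarith
      _ ≤ ∑ i : Fin (n+1), (volume (B i)).toReal := Finset.sum_le_sum fun i _ => hq i
  -- put it together
  calc ((n + 1 : ℝ≥0∞) / 2) * I ≤ (∑ i : Fin (n+1), volume (B i)) * I :=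
        mul_le_mul_left hnum I
    _ = ∑ i : Fin (n+1), I * volume (B i) := by
        rw [Finset.sum_mul]; exact Finset.sum_congr rfl fun i _ => mul_comm _ _
    _ = ∑ i : Fin (n+1), ∫⁻ ω, f i ω := Finset.sum_congr rfl fun i _ => (hf_int i).symm
    _ = ∫⁻ ω, ∑ i, f i ω := (lintegral_finset_sum _ (fun i _ => hfmeas i)).symm
    _ ≤ ∫⁻ ω, M ω := lintegral_mono hsum_le
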